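/- Let D ≥ 2 and let w₀ < w₁ < ... < w_D be real numbers. There exist real coefficients (β_{d,0}, β_{d,1}) for d = 0, 1, ..., D+1 such that for every w ∈ ℝ, the index d maximizing β_{d,0} + β_{d,1}·w is unique and equals d if and only if w lies in the interior of the interval I_d, where I_0 = (−∞, w₀], I_d = (w_{d−1}, w_d] for 1 ≤ d ≤ D, and I_{D+1} = (w_D, ∞). -/

import Mathlib

/-- Interior of the `d`-th interval in the partition of `ℝ` determined by
points `w 0 < w 1 < ... < w D`: `I 0 = (-∞, w 0]`, `I d = (w (d-1), w d]`
for `1 ≤ d ≤ D`, and `I (D+1) = (w D, ∞)`. -/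
def intervalInterior (D : ℕ) (w : Fin (D + 1) → ℝ) (d : Fin (D + 2)) : Set ℝ :=
  if h0 : d.val = 0 then Set.Iio (w 0)
  else if hD : d.val = D + 1 then Set.Ioi (w (Fin.last D))
  else Set.Ioo (w ⟨d.val - 1, by omega⟩) (w ⟨d.val, by have := d.isLt; omega⟩)

theorem affine_argmax_partition (D : ℕ) (hD : 2 ≤ D)
    (w : Fin (D + 1) → ℝ) (hw : StrictMono w) :
    ∃ β₀ β₁ : Fin (D + 2) → ℝ,
      ∀ (x : ℝ) (d : Fin (D + 2)),
        (∀ d', d' ≠ d → β₀ d' + β₁ d' * x < β₀ d + β₁ d * x) ↔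
          x ∈ intervalInterior D w d := by
  set g : ℕ → ℝ := fun k => w ⟨min k D, by omega⟩ with hg
  have hgmono : Monotone g := fun a b hab =>
    hw.monotone (by simp [Fin.le_def]; omega)
  have hgeq : ∀ k, ∀ h : k ≤ D, g k = w ⟨k, by omega⟩ := by
    intro k h; simp [hg, min_eq_left h]
  refine ⟨fun d => -∑ k ∈ Finset.range d.val, g k, fun d => (d.val : ℝ), ?_⟩
  intro x d
  have key : ∀ m n : ℕ, m ≤ n →
      ((-∑ k ∈ Finset.range n, g k) + (n : ℝ) * x) -
        ((-∑ k ∈ Finset.range m, g k) + (m : ℝ) * x)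
        = ∑ k ∈ Finset.Ico m n, (x - g k) := by
    intro m n hmn
    rw [Finset.sum_sub_distrib, Finset.sum_const, Finset.sum_Ico_eq_sub _ hmn,
      Nat.card_Ico, nsmul_eq_mul]
    push_cast [hmn]
    ring
  constructor
  · intro H
    unfold intervalInterior
    split_ifs with h0 hDd
    · -- d = 0 : need x < w 0
      have h1 : (⟨1, by omega⟩ : Fin (D + 2)) ≠ d := by
        intro h; apply absurd (congrArg Fin.val h); simp [h0]
      have hF := H _ h1
      simp only at hF
      rw [h0] at hF
      have hne := key 0 1 (by omega)
      have hsum : ∑ k ∈ Finset.Ico 0 1, (x - g k) < 0 := by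
        rw [← hne]; push_cast; push_cast at hF; linarith
      rw [(show Finset.Ico (0:ℕ) 1 = Finset.Icc 0 0 from Finset.Ico_add_one_right_eq_Icc (a := 0) (b := 0)), Finset.Icc_self, Finset.sum_singleton] at hsum
      have hg0 : g 0 = w ⟨0, by omega⟩ := hgeq 0 (by omega)
      show x < w 0
      have : w 0 = w ⟨0, by omega⟩ := rfl
      rw [this, ← hg0]; linarith
    · -- d = D + 1 : need w D < x
      have h1 : (⟨D, by omega⟩ : Fin (D + 2)) ≠ d := by
        intro h; apply absurd (congrArg Fin.val h); simp; omega
      have hF := H _ h1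
      simp only at hF
      rw [hDd] at hF
      have hne := key D (D + 1) (by omega)
      have hsum : (0:ℝ) < ∑ k ∈ Finset.Ico D (D+1), (x - g k) := by
        rw [← hne]; push_cast; push_cast at hF; linarith
      rw [Finset.Ico_add_one_right_eq_Icc, Finset.Icc_self, Finset.sum_singleton] at hsum
      have hgD : g D = w (Fin.last D) := hgeq D le_rfl
      show w (Fin.last D) < x
      rw [← hgD]; linarith
    · -- middle
      constructor
      · have h1 : (⟨d.val - 1, by omega⟩ : Fin (D + 2)) ≠ d := by
          intro h; apply absurd (congrArg Fin.val h); simp; omega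
        have hF := H _ h1
        simp only at hF
        have hne := key (d.val - 1) d.val (by omega)
        have hsum : (0:ℝ) < ∑ k ∈ Finset.Ico (d.val - 1) d.val, (x - g k) := by
          rw [← hne]; linarith
        have heq : Finset.Ico (d.val - 1) d.val = {d.val - 1} := by
          ext k; simp only [Finset.mem_Ico, Finset.mem_singleton]; omega
        rw [heq, Finset.sum_singleton] at hsum
        rw [← hgeq (d.val - 1) (by have := d.isLt; omega)]
        linarith
      · have h1 : (⟨d.val + 1, by have := d.isLt; omega⟩ : Fin (D + 2)) ≠ d := by
          intro h; apply absurd (congrArg Fin.val h); simp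
        have hF := H _ h1
        simp only at hF
        have hne := key d.val (d.val + 1) (by omega)
        have hsum : (∑ k ∈ Finset.Ico d.val (d.val + 1), (x - g k)) < 0 := by
          rw [← hne]; push_cast; push_cast at hF; linarith
        rw [Finset.Ico_add_one_right_eq_Icc, Finset.Icc_self, Finset.sum_singleton] at hsum
        rw [← hgeq d.val (by have := d.isLt; omega)]
        linarith
  · intro hx
    -- establish hL : ∀ k < d.val, g k < x  and  hR : ∀ k, d.val ≤ k → x < g k
    have hdlt := d.isLt
    have hbound : (∀ k < d.val, g k < x) ∧ (∀ k, d.val ≤ k → k ≤ D → x < g k) := by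
      unfold intervalInterior at hx
      split_ifs at hx with h0 hDd
      · refine ⟨by omega, fun k hk hk' => ?_⟩
        have : g 0 ≤ g k := hgmono (Nat.zero_le k)
        have := hgeq 0 (by omega)
        simp [Set.mem_Iio] at hx
        simp_all
        linarith
      · refine ⟨fun k hk => ?_, fun k hk hk' => by omega⟩
        have : g k ≤ g D := hgmono (by omega)
        have hgD : g D = w (Fin.last D) := hgeq D le_rfl
        simp [Set.mem_Ioi] at hx
        rw [hgD] at this
        linarith
      · obtain ⟨hx1, hx2⟩ := hx
        refine ⟨fun k hk => ?_, fun k hk hk' => ?_⟩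
        · have : g k ≤ g (d.val - 1) := hgmono (by omega)
          rw [hgeq (d.val - 1) (by omega)] at this
          linarith
        · have : g d.val ≤ g k := hgmono hk
          rw [hgeq d.val (by omega)] at this
          linarith
    obtain ⟨hL, hR⟩ := hbound
    intro d' hd'
    have hvne : d'.val ≠ d.val := fun h => hd' (Fin.ext h)
    rcases lt_or_gt_of_ne hvne with hlt | hgt
    · rw [← sub_pos, key d'.val d.val (le_of_lt hlt)]
      apply Finset.sum_pos
      · intro k hk
        rw [Finset.mem_Ico] at hk
        have := hL k hk.2
        linarith
      · exact ⟨d'.val, Finset.mem_Ico.mpr ⟨le_rfl, hlt⟩⟩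
    · rw [← sub_neg, key d.val d'.val (le_of_lt hgt)]
      apply Finset.sum_neg
      · intro k hk
        rw [Finset.mem_Ico] at hk
        have hkD : k ≤ D := by have := d'.isLt; omega
        have := hR k hk.1 hkD
        linarith
      · exact ⟨d.val, Finset.mem_Ico.mpr ⟨le_rfl, hgt⟩⟩
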